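/- Let A be an associative unital ℂ-algebra, Q ∈ ℂ with Q ≠ 0 and Q² ≠ 1, and let u, y ∈ A be invertible with u·y = Q²·y·u. Fix λ ∈ ℂ, λ ≠ 0, and nonzero constants c_E, c_F ∈ ℂ with c_E·c_F = -(Q - Q^{-1})^{-2}. Define K := u^{-1}, F := c_F·y, and E := c_E·((λ + λ^{-1})·y^{-1} + Q·u·y^{-1} + Q^{-1}·u^{-1}·y^{-1}). Then K·E = Q²·E·K, K·F = Q^{-2}·F·K, and E·F - F·E = (K - K^{-1})/(Q - Q^{-1}). -/

import Mathlib

/-- The infinite-dimensional representation `π^λ` of `𝒰_Q(sl₂)` inside the quantum torus: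
with `uy = Q²yu`, setting `K = u⁻¹`, `F = c_F y`,
`E = c_E((λ+λ⁻¹)y⁻¹ + Q·u·y⁻¹ + Q⁻¹·u⁻¹·y⁻¹)` where `c_E c_F = -(Q-Q⁻¹)⁻²`, the
`𝒰_Q(sl₂)` relations `KE = Q²EK`, `KF = Q⁻²FK`, `[E,F] = (K-K⁻¹)/(Q-Q⁻¹)` hold. -/
theorem weyl_pair_rep {A : Type*} [Ring A] [Algebra ℂ A]
    (Q : ℂ) (hQ0 : Q ≠ 0) (hQ1 : Q ^ 2 ≠ 1)
    (u y : Aˣ) (huy : (u : A) * (y : A) = Q ^ 2 • ((y : A) * (u : A)))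
    (l : ℂ) (hl : l ≠ 0)
    (cE cF : ℂ) (hcE : cE ≠ 0) (hcF : cF ≠ 0)
    (hc : cE * cF = -((Q - Q⁻¹) ^ 2)⁻¹)
    (K E F : A)
    (hK : K = ((u⁻¹ : Aˣ) : A))
    (hF : F = cF • ((y : A)))
    (hE : E = cE • ((l + l⁻¹) • ((y⁻¹ : Aˣ) : A)
        + Q • ((u : A) * ((y⁻¹ : Aˣ) : A))
        + Q⁻¹ • (((u⁻¹ : Aˣ) : A) * ((y⁻¹ : Aˣ) : A)))) :
    K * E = Q ^ 2 • (E * K) ∧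
    K * F = (Q ^ 2)⁻¹ • (F * K) ∧
    E * F - F * E = (Q - Q⁻¹)⁻¹ • (K - ((u : A))) := by
  have hQ2 : (Q ^ 2 : ℂ) ≠ 0 := pow_ne_zero _ hQ0
  have h21 : Q ^ 2 - 1 ≠ 0 := sub_ne_zero.mpr hQ1
  have hui : ((u⁻¹ : Aˣ) : A) * (u : A) = 1 := u.inv_mul
  have huiv : (u : A) * ((u⁻¹ : Aˣ) : A) = 1 := u.mul_inv
  have hyi : ((y⁻¹ : Aˣ) : A) * (y : A) = 1 := y.inv_mul
  have hyiv : (y : A) * ((y⁻¹ : Aˣ) : A) = 1 := y.mul_inv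
  -- B : u⁻¹ y = (Q²)⁻¹ • (y u⁻¹)
  have hB' : (y : A) * ((u⁻¹ : Aˣ) : A) = Q ^ 2 • (((u⁻¹ : Aˣ) : A) * (y : A)) :=
    calc (y : A) * ((u⁻¹ : Aˣ) : A)
        = ((u⁻¹ : Aˣ) : A) * ((u : A) * (y : A)) * ((u⁻¹ : Aˣ) : A) := by
          rw [← mul_assoc, hui, one_mul]
      _ = ((u⁻¹ : Aˣ) : A) * (Q ^ 2 • ((y : A) * (u : A))) * ((u⁻¹ : Aˣ) : A) := by rw [huy]
      _ = Q ^ 2 • (((u⁻¹ : Aˣ) : A) * (y : A)) := by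
          rw [mul_smul_comm, smul_mul_assoc, mul_assoc, mul_assoc, huiv, mul_one]
  have hB : ((u⁻¹ : Aˣ) : A) * (y : A) = (Q ^ 2)⁻¹ • ((y : A) * ((u⁻¹ : Aˣ) : A)) := by
    rw [hB', smul_smul, inv_mul_cancel₀ hQ2, one_smul]
  -- C : u y⁻¹ = (Q²)⁻¹ • (y⁻¹ u)
  have hC : (u : A) * ((y⁻¹ : Aˣ) : A) = (Q ^ 2)⁻¹ • (((y⁻¹ : Aˣ) : A) * (u : A)) := by
    have hC' : ((y⁻¹ : Aˣ) : A) * (u : A) = Q ^ 2 • ((u : A) * ((y⁻¹ : Aˣ) : A)) :=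
      calc ((y⁻¹ : Aˣ) : A) * (u : A)
          = ((y⁻¹ : Aˣ) : A) * ((u : A) * (y : A)) * ((y⁻¹ : Aˣ) : A) := by
            rw [mul_assoc, mul_assoc, hyiv, mul_one]
        _ = ((y⁻¹ : Aˣ) : A) * (Q ^ 2 • ((y : A) * (u : A))) * ((y⁻¹ : Aˣ) : A) := by rw [huy]
        _ = Q ^ 2 • ((u : A) * ((y⁻¹ : Aˣ) : A)) := by
            rw [mul_smul_comm, smul_mul_assoc, ← mul_assoc, hyi, one_mul]
    rw [hC', smul_smul, inv_mul_cancel₀ hQ2, one_smul]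
  -- D : u⁻¹ y⁻¹ = Q² • (y⁻¹ u⁻¹)
  have hD : ((u⁻¹ : Aˣ) : A) * ((y⁻¹ : Aˣ) : A)
      = Q ^ 2 • (((y⁻¹ : Aˣ) : A) * ((u⁻¹ : Aˣ) : A)) := by
    have hD' : ((y⁻¹ : Aˣ) : A) * ((u⁻¹ : Aˣ) : A)
        = (Q ^ 2)⁻¹ • (((u⁻¹ : Aˣ) : A) * ((y⁻¹ : Aˣ) : A)) :=
      calc ((y⁻¹ : Aˣ) : A) * ((u⁻¹ : Aˣ) : A)
          = ((y⁻¹ : Aˣ) : A) * (((u⁻¹ : Aˣ) : A) * (y : A)) * ((y⁻¹ : Aˣ) : A) := by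
            rw [mul_assoc, mul_assoc, hyiv, mul_one]
        _ = ((y⁻¹ : Aˣ) : A) * ((Q ^ 2)⁻¹ • ((y : A) * ((u⁻¹ : Aˣ) : A))) * ((y⁻¹ : Aˣ) : A) := by
            rw [hB]
        _ = (Q ^ 2)⁻¹ • (((u⁻¹ : Aˣ) : A) * ((y⁻¹ : Aˣ) : A)) := by
            rw [mul_smul_comm, smul_mul_assoc, ← mul_assoc, hyi, one_mul]
    rw [hD', smul_smul, mul_inv_cancel₀ hQ2, one_smul]
  have hQdeq : Q - Q⁻¹ = (Q ^ 2 - 1) / Q := by field_simp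
  have hQd : Q - Q⁻¹ ≠ 0 := by rw [hQdeq]; exact div_ne_zero h21 hQ0
  subst hK hF hE
  refine ⟨?_, ?_, ?_⟩
  · -- K E = Q² E K
    have r2 : ((u⁻¹ : Aˣ) : A) * ((u : A) * ((y⁻¹ : Aˣ) : A)) = ((y⁻¹ : Aˣ) : A) := by
      rw [← mul_assoc, hui, one_mul]
    have r4 : (u : A) * (((y⁻¹ : Aˣ) : A) * ((u⁻¹ : Aˣ) : A)) = (Q ^ 2)⁻¹ • ((y⁻¹ : Aˣ) : A) := by
      rw [← mul_assoc, hC, smul_mul_assoc, mul_assoc, huiv, mul_one]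
    have r3 : ((u⁻¹ : Aˣ) : A) * (((y⁻¹ : Aˣ) : A) * ((u⁻¹ : Aˣ) : A))
        = Q ^ 2 • (((y⁻¹ : Aˣ) : A) * (((u⁻¹ : Aˣ) : A) * ((u⁻¹ : Aˣ) : A))) := by
      rw [← mul_assoc, hD, smul_mul_assoc, mul_assoc]
    simp only [mul_add, add_mul, smul_add, mul_smul_comm, smul_mul_assoc, mul_assoc]
    rw [hD, r2, r4]
    simp only [mul_smul_comm, smul_mul_assoc]
    rw [r3]
    match_scalars <;> field_simp <;> ring
  · -- K F = Q⁻² F K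
    rw [mul_smul_comm, smul_mul_assoc, hB, smul_smul, smul_smul, mul_comm]
  · -- E F - F E
    have q2 : (y : A) * ((u : A) * ((y⁻¹ : Aˣ) : A)) = (Q ^ 2)⁻¹ • (u : A) := by
      rw [hC, mul_smul_comm, ← mul_assoc, hyiv, one_mul]
    have q3 : (y : A) * (((u⁻¹ : Aˣ) : A) * ((y⁻¹ : Aˣ) : A)) = Q ^ 2 • ((u⁻¹ : Aˣ) : A) := by
      rw [hD, mul_smul_comm, ← mul_assoc, hyiv, one_mul]
    have hc2 : cE * cF * (Q ^ 2 - 1) ^ 2 = -(Q ^ 2) := by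
      rw [hc, hQdeq]
      field_simp
    simp only [mul_add, add_mul, smul_add, mul_smul_comm, smul_mul_assoc, mul_assoc, smul_sub]
    rw [hyi, hyiv, q2, q3]
    simp only [mul_one]
    have h21' : (-1 : ℂ) + Q ^ 2 ≠ 0 := by rw [neg_add_eq_sub]; exact h21
    match_scalars
    · ring
    · rw [hQdeq, inv_div]
      field_simp
      linear_combination hc2
    · rw [hQdeq, inv_div]
      field_simp
      linear_combination -hc2
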